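/- For d ≥ 1 and n ≥ 2, the number N_d(n) of (n, dn-1)-core partitions with distinct parts satisfies N_d(1)=1, N_d(2)=d, and N_d(n)=N_d(n-1)+d·N_d(n-2) for n ≥ 3. -/

import Mathlib

def hook (Y : YoungDiagram) (i j : ℕ) : ℕ :=
  (Y.rowLen i - j) + (Y.colLen j - i) - 1

def IsCore (Y : YoungDiagram) (t : ℕ) : Prop :=
  ∀ c ∈ Y.cells, ¬ (t ∣ hook Y c.1 c.2)

def DistinctParts (Y : YoungDiagram) : Prop :=
  ∀ i : ℕ, 0 < Y.rowLen (i + 1) → Y.rowLen (i + 1) < Y.rowLen i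

def betaSet (Y : YoungDiagram) : Finset ℕ :=
  (Finset.range (Y.colLen 0)).image (fun i => Y.rowLen i + (Y.colLen 0 - 1 - i))

noncomputable def Ncount (d n : ℕ) : ℕ :=
  {Y : YoungDiagram | DistinctParts Y ∧ IsCore Y n ∧ IsCore Y (d * n - 1)}.ncard

namespace Straub


open YoungDiagram Finset

def nrows (Y : YoungDiagram) : ℕ := Y.colLen 0

def bFun (Y : YoungDiagram) (i : ℕ) : ℕ := Y.rowLen i + (nrows Y - 1 - i)

lemma mem_betaSet {Y : YoungDiagram} {x : ℕ} :
    x ∈ betaSet Y ↔ ∃ i < nrows Y, bFun Y i = x := by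
  simp [betaSet, nrows, bFun]

lemma lt_nrows_iff {Y : YoungDiagram} {i : ℕ} : i < nrows Y ↔ 0 < Y.rowLen i := by
  rw [nrows, ← @YoungDiagram.mem_iff_lt_colLen Y i 0, YoungDiagram.mem_iff_lt_rowLen]

lemma rowLen_eq_zero {Y : YoungDiagram} {i : ℕ} (h : nrows Y ≤ i) : Y.rowLen i = 0 := by
  have := @lt_nrows_iff Y i; omega

lemma bFun_strict (Y : YoungDiagram) {i i' : ℕ} (h : i < i') (h' : i' < nrows Y) :
    bFun Y i' + (i' - i) ≤ bFun Y i := by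
  have h1 := Y.rowLen_anti i i' (le_of_lt h)
  simp only [bFun, nrows] at *
  omega

lemma one_le_bFun {Y : YoungDiagram} {i : ℕ} (h : i < nrows Y) : 1 ≤ bFun Y i := by
  have := lt_nrows_iff.mp h
  simp only [bFun, nrows] at *
  omega

lemma rowLen_strict {Y : YoungDiagram} (hD : DistinctParts Y) :
    ∀ m i : ℕ, i + m < nrows Y → Y.rowLen (i + m) + m ≤ Y.rowLen i := by
  intro m
  induction m with
  | zero => intro i _; simp
  | succ m ih =>
    intro i h
    have e : i + (m+1) = (i + m) + 1 := by omega
    rw [e] at h ⊢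
    have h1 : 0 < Y.rowLen (i + m + 1) := lt_nrows_iff.mp h
    have h2 := hD (i + m) h1
    have h3 := ih i (by omega)
    omega

lemma bFun_gaps {Y : YoungDiagram} (hD : DistinctParts Y) {i i' : ℕ} (h : i < i')
    (h' : i' < nrows Y) : bFun Y i' + 2 * (i' - i) ≤ bFun Y i := by
  have h1 := rowLen_strict hD (i' - i) i (by omega)
  have : i + (i' - i) = i' := by omega
  rw [this] at h1
  simp only [bFun, nrows] at *
  omega

lemma gaps2_betaSet {Y : YoungDiagram} (hD : DistinctParts Y) :
    ∀ x ∈ betaSet Y, x + 1 ∉ betaSet Y := by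
  intro x hx hx1
  obtain ⟨i', hi', hb'⟩ := mem_betaSet.mp hx
  obtain ⟨i, hi, hb⟩ := mem_betaSet.mp hx1
  rcases lt_trichotomy i i' with h | h | h
  · have := bFun_gaps hD h hi'; omega
  · subst h; omega
  · have := bFun_strict Y h hi; omega

lemma hook_eq {Y : YoungDiagram} {i j : ℕ} (h : (i, j) ∈ Y) :
    i < nrows Y ∧ 1 ≤ hook Y i j ∧
      hook Y i j + (j + (nrows Y - Y.colLen j)) = bFun Y i := by
  have hj : j < Y.rowLen i := YoungDiagram.mem_iff_lt_rowLen.mp h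
  have hi : i < Y.colLen j := YoungDiagram.mem_iff_lt_colLen.mp h
  have hc : Y.colLen j ≤ nrows Y := Y.colLen_anti 0 j (Nat.zero_le j)
  simp only [bFun, nrows, hook] at *
  omega

lemma notmem_xval {Y : YoungDiagram} (j : ℕ) {i' : ℕ} (h' : i' < nrows Y) :
    bFun Y i' ≠ j + (nrows Y - Y.colLen j) := by
  have hc : Y.colLen j ≤ nrows Y := Y.colLen_anti 0 j (Nat.zero_le j)
  by_cases hmem : (i', j) ∈ Y
  · have hj : j < Y.rowLen i' := YoungDiagram.mem_iff_lt_rowLen.mp hmem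
    have hi : i' < Y.colLen j := YoungDiagram.mem_iff_lt_colLen.mp hmem
    simp only [bFun, nrows] at *
    omega
  · have hj : Y.rowLen i' ≤ j := by
      by_contra hh
      exact hmem (YoungDiagram.mem_iff_lt_rowLen.mpr (by omega))
    have hi : Y.colLen j ≤ i' := by
      by_contra hh
      exact hmem (YoungDiagram.mem_iff_lt_colLen.mpr (by omega))
    simp only [bFun, nrows] at *
    omega

def Closed (t : ℕ) (B : Finset ℕ) : Prop := ∀ x ∈ B, t ≤ x → x - t ∈ B

lemma closed_chain {t : ℕ} {B : Finset ℕ} (h : Closed t B) :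
    ∀ (m : ℕ) (x : ℕ), x ∈ B → m * t ≤ x → x - m * t ∈ B := by
  intro m
  induction m with
  | zero => intro x hx _; simpa using hx
  | succ m ih =>
    intro x hx hle
    have h1 : x - (m+1) * t = (x - m * t) - t := by
      have : (m+1) * t = m * t + t := by ring
      omega
    have h2 : (m+1) * t = m * t + t := by ring
    rw [h1]
    exact h _ (ih x hx (by omega)) (by omega)

lemma bFun_def (Y : YoungDiagram) (i : ℕ) :
    bFun Y i = Y.rowLen i + (nrows Y - 1 - i) := rfl

lemma isCore_of_closed {Y : YoungDiagram} {t : ℕ} (ht : 1 ≤ t)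
    (hcl : Closed t (betaSet Y)) : IsCore Y t := by
  rintro ⟨i, j⟩ hc hdvd
  rw [YoungDiagram.mem_cells] at hc
  obtain ⟨hik, hpos, hsum⟩ := hook_eq hc
  have hdvd' : t ∣ hook Y i j := hdvd
  obtain ⟨m, hm⟩ := hdvd'
  have h4 : m * t = t * m := Nat.mul_comm m t
  have hb : bFun Y i ∈ betaSet Y := mem_betaSet.mpr ⟨i, hik, rfl⟩
  have hle : m * t ≤ bFun Y i := by omega
  have h2 := closed_chain hcl m _ hb hle
  have h3 : bFun Y i - m * t = j + (nrows Y - Y.colLen j) := by omega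
  rw [h3] at h2
  obtain ⟨i', hi', hbi'⟩ := mem_betaSet.mp h2
  exact notmem_xval j hi' hbi'

lemma closed_of_isCore {Y : YoungDiagram} {t : ℕ} (ht : 1 ≤ t) (hcore : IsCore Y t) :
    Closed t (betaSet Y) := by
  intro x hx htx
  obtain ⟨i, hik, hbx⟩ := mem_betaSet.mp hx
  by_contra hnot
  set w := x - t with hw
  have hex : ∃ m, nrows Y ≤ m ∨ bFun Y m ≤ w := ⟨nrows Y, Or.inl le_rfl⟩
  set s := Nat.find hex with hs
  have hsk : s ≤ nrows Y := Nat.find_le (Or.inl le_rfl)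
  have hK1 : ∀ i', i' < s → w < bFun Y i' := by
    intro i' h
    have h2 := Nat.find_min hex h
    push_neg at h2
    exact h2.2
  have hwB : ∀ i', i' < nrows Y → bFun Y i' ≠ w := by
    intro i' h' heq
    exact hnot (mem_betaSet.mpr ⟨i', h', heq⟩)
  have hK2 : ∀ i', s ≤ i' → i' < nrows Y → bFun Y i' + (i' - s) + 1 ≤ w := by
    intro i' h1 h2
    have hsk' : s < nrows Y := lt_of_le_of_lt h1 h2
    have hbs : bFun Y s ≤ w := by
      rcases Nat.find_spec hex with h | h
      · omega
      · exact h
    have hbs' : bFun Y s ≠ w := hwB s hsk'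
    rcases eq_or_lt_of_le h1 with rfl | h1'
    · omega
    · have := bFun_strict Y h1' h2; omega
  have hj0 : nrows Y ≤ w + s := by
    rcases eq_or_lt_of_le hsk with heq | hlt
    · omega
    · have h1 := hK2 (nrows Y - 1) (by omega) (by omega)
      have h2 := one_le_bFun (Y := Y) (i := nrows Y - 1) (by omega)
      omega
  set j := w + s - nrows Y with hjd
  have hK4 : ∀ i', i' < nrows Y → (j < Y.rowLen i' ↔ i' < s) := by
    intro i' h'
    have e := bFun_def Y i'
    constructor
    · intro hr
      by_contra hge
      have := hK2 i' (by omega) h'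
      omega
    · intro hlt
      have hb1 : w + (s - i') ≤ bFun Y i' := by
        rcases eq_or_lt_of_le (Nat.succ_le_of_lt hlt) with heq | hlt'
        · have := hK1 i' hlt; omega
        · have hm := bFun_strict Y (show i' < s - 1 by omega) (show s - 1 < nrows Y by omega)
          have := hK1 (s-1) (by omega)
          omega
      omega
  have hK5 : Y.colLen j = s := by
    have hmem1 : ∀ i', (i', j) ∈ Y ↔ i' < s := by
      intro i'
      by_cases h' : i' < nrows Y
      · rw [YoungDiagram.mem_iff_lt_rowLen]
        exact hK4 i' h'
      · have h0 : Y.rowLen i' = 0 := rowLen_eq_zero (by omega)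
        rw [YoungDiagram.mem_iff_lt_rowLen, h0]
        constructor
        · intro hcc; omega
        · intro hcc; omega
    by_contra hne
    rcases Nat.lt_or_ge (Y.colLen j) s with hlt | hge
    · have h1 : (Y.colLen j, j) ∈ Y := (hmem1 _).mpr hlt
      rw [YoungDiagram.mem_iff_lt_colLen] at h1
      omega
    · have h2 : (s, j) ∈ Y := YoungDiagram.mem_iff_lt_colLen.mpr (by omega)
      rw [hmem1 s] at h2
      omega
  have hisw : i < s := by
    by_contra hge
    have := hK2 i (by omega) hik
    omega
  have hmemij : (i, j) ∈ Y := YoungDiagram.mem_iff_lt_rowLen.mpr ((hK4 i hik).mpr hisw)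
  obtain ⟨_, hpos, hsum⟩ := hook_eq hmemij
  have hhook : hook Y i j = t := by rw [hK5] at hsum; omega
  exact hcore (i, j) ((YoungDiagram.mem_cells _).mpr hmemij) (by rw [hhook])

lemma isCore_iff {Y : YoungDiagram} {t : ℕ} (ht : 1 ≤ t) :
    IsCore Y t ↔ Closed t (betaSet Y) :=
  ⟨closed_of_isCore ht, isCore_of_closed ht⟩
lemma bFun_injOn (Y : YoungDiagram) : ∀ i, i < nrows Y → ∀ i', i' < nrows Y →
    bFun Y i = bFun Y i' → i = i' := by
  intro i hi i' hi' h
  rcases lt_trichotomy i i' with hh | hh | hh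
  · have := bFun_strict Y hh hi'; omega
  · exact hh
  · have := bFun_strict Y hh hi; omega

lemma betaSet_eq_image (Y : YoungDiagram) :
    betaSet Y = (Finset.range (nrows Y)).image (bFun Y) := rfl

lemma card_betaSet (Y : YoungDiagram) : (betaSet Y).card = nrows Y := by
  rw [betaSet_eq_image, Finset.card_image_of_injOn, Finset.card_range]
  intro a ha b hb hab
  simp only [Finset.coe_range, Set.mem_Iio] at ha hb
  exact bFun_injOn Y a ha b hb hab

lemma bFun_filter_card (Y : YoungDiagram) {i : ℕ} (hi : i < nrows Y) :
    ((betaSet Y).filter (fun y => bFun Y i < y)).card = i := by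
  have hset : (betaSet Y).filter (fun y => bFun Y i < y)
      = (Finset.range i).image (bFun Y) := by
    ext x
    simp only [Finset.mem_filter, Finset.mem_image, Finset.mem_range, mem_betaSet]
    constructor
    · rintro ⟨⟨i', hi', rfl⟩, hlt⟩
      refine ⟨i', ?_, rfl⟩
      by_contra hge
      rcases eq_or_lt_of_le (Nat.le_of_not_lt hge) with heq | hh
      · subst heq; omega
      · have := bFun_strict Y hh hi'; omega
    · rintro ⟨i', hi', rfl⟩
      have h1 := bFun_strict Y hi' hi
      exact ⟨⟨i', by omega, rfl⟩, by omega⟩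
  rw [hset, Finset.card_image_of_injOn, Finset.card_range]
  intro a ha b hb hab
  simp only [Finset.coe_range, Set.mem_Iio] at ha hb
  exact bFun_injOn Y a (by omega) b (by omega) hab

lemma betaSet_injective {Y1 Y2 : YoungDiagram} (h : betaSet Y1 = betaSet Y2) : Y1 = Y2 := by
  have hk : nrows Y1 = nrows Y2 := by rw [← card_betaSet, ← card_betaSet, h]
  have key : ∀ u v : ℕ, u ∈ betaSet Y1 → v ∈ betaSet Y1 → u < v →
      ((betaSet Y1).filter (fun y => u < y)).card ≠
        ((betaSet Y1).filter (fun y => v < y)).card := by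
    intro u v hu hv huv
    have hsub : insert v ((betaSet Y1).filter (fun y => v < y)) ⊆
        (betaSet Y1).filter (fun y => u < y) := by
      intro y hy
      rcases Finset.mem_insert.mp hy with rfl | hy'
      · exact Finset.mem_filter.mpr ⟨hv, huv⟩
      · have h2 := Finset.mem_filter.mp hy'
        exact Finset.mem_filter.mpr ⟨h2.1, lt_trans huv h2.2⟩
    have hcard := Finset.card_le_card hsub
    rw [Finset.card_insert_of_notMem (by simp)] at hcard
    omega
  have hb : ∀ i, i < nrows Y1 → bFun Y1 i = bFun Y2 i := by
    intro i hi
    have c1 := bFun_filter_card Y1 hi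
    have c2 := bFun_filter_card Y2 (show i < nrows Y2 by omega)
    rw [← h] at c2
    have m1 : bFun Y1 i ∈ betaSet Y1 := mem_betaSet.mpr ⟨i, hi, rfl⟩
    have m2 : bFun Y2 i ∈ betaSet Y1 := by
      rw [h]; exact mem_betaSet.mpr ⟨i, by omega, rfl⟩
    by_contra hne
    rcases lt_or_gt_of_ne hne with hlt | hlt
    · exact key _ _ m1 m2 hlt (by rw [c1, c2])
    · exact key _ _ m2 m1 hlt (by rw [c2, c1])
  have hrow : ∀ i, Y1.rowLen i = Y2.rowLen i := by
    intro i
    by_cases hi : i < nrows Y1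
    · have h3 := hb i hi
      have e1 := bFun_def Y1 i
      have e2 := bFun_def Y2 i
      omega
    · rw [rowLen_eq_zero (Y := Y1) (by omega), rowLen_eq_zero (Y := Y2) (by omega)]
  ext ⟨i, j⟩
  rw [YoungDiagram.mem_cells, YoungDiagram.mem_cells, YoungDiagram.mem_iff_lt_rowLen,
    YoungDiagram.mem_iff_lt_rowLen, hrow]

lemma exists_diagram {B : Finset ℕ} (h0 : 0 ∉ B) (h2 : ∀ x ∈ B, x + 1 ∉ B) :
    ∃ Y : YoungDiagram, DistinctParts Y ∧ betaSet Y = B := by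
  classical
  set k := B.card with hkd
  set s := B.sort (· ≤ ·) with hsd
  have hlen : s.length = k := Finset.length_sort _
  have hmemB : ∀ x, x ∈ s ↔ x ∈ B := fun x => Finset.mem_sort _
  have hsorted : s.SortedLT := Finset.sortedLT_sort B
  have hmem : ∀ p, p < k → s.getD p 0 ∈ B := by
    intro p hp
    rw [List.getD_eq_getElem s 0 (by omega)]
    exact (hmemB _).mp (List.getElem_mem _)
  have hmono : ∀ p q, p < q → q < k → s.getD p 0 < s.getD q 0 := by
    intro p q hpq hq
    rw [List.getD_eq_getElem s 0 (by omega), List.getD_eq_getElem s 0 (by omega)]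
    exact hsorted.strictMono_get
      (show (⟨p, by omega⟩ : Fin s.length) < ⟨q, by omega⟩ by simpa using hpq)
  have hstep : ∀ p, p + 1 < k → s.getD p 0 + 2 ≤ s.getD (p+1) 0 := by
    intro p hp
    have hlt := hmono p (p+1) (by omega) hp
    have hne := h2 _ (hmem p (by omega))
    by_contra hh
    have he : s.getD p 0 + 1 = s.getD (p+1) 0 := by omega
    rw [he] at hne
    exact hne (hmem (p+1) hp)
  have hgap : ∀ m p, p + m < k → s.getD p 0 + 2 * m ≤ s.getD (p + m) 0 := by
    intro m
    induction m with
    | zero => intro p h; simp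
    | succ m ih =>
      intro p h
      have h1 := ih p (by omega)
      have h2' := hstep (p + m) (by omega)
      have e : p + (m + 1) = (p + m) + 1 := by omega
      rw [e]
      omega
  have hpos : ∀ p, p < k → 2 * p + 1 ≤ s.getD p 0 := by
    intro p h
    have h1 := hgap p 0 (by omega)
    have h01 : 1 ≤ s.getD 0 0 := by
      have hm := hmem 0 (by omega)
      rcases Nat.eq_zero_or_pos (s.getD 0 0) with hz | hz
      · rw [hz] at hm; exact absurd hm h0
      · exact hz
    simp only [Nat.zero_add] at h1
    omega
  -- row length function
  set wf : ℕ → ℕ := fun i => s.getD (k - 1 - i) 0 - (k - 1 - i) with hwf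
  set w : List ℕ := List.ofFn (fun i : Fin k => wf (i : ℕ)) with hwd
  have hwlen : w.length = k := by simp [hwd]
  have hwget : ∀ i, i < k → w.getD i 0 = wf i := by
    intro i h
    rw [List.getD_eq_getElem w 0 (by omega)]
    simp only [hwd, List.getElem_ofFn]
  have hwdec : ∀ i i', i < i' → i' < k → wf i' + (i' - i) ≤ wf i := by
    intro i i' h h'
    have hg := hgap ((k - 1 - i) - (k - 1 - i')) (k - 1 - i') (by omega)
    have e : k - 1 - i' + ((k - 1 - i) - (k - 1 - i')) = k - 1 - i := by omega
    rw [e] at hg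
    have hp1 := hpos (k - 1 - i') (by omega)
    simp only [hwf]
    omega
  have hwpos : ∀ i, i < k → 1 ≤ wf i := by
    intro i h
    have := hpos (k - 1 - i) (by omega)
    simp only [hwf]
    omega
  have hwexact : ∀ i, i < k → wf i + (k - 1 - i) = s.getD (k - 1 - i) 0 := by
    intro i h
    have := hpos (k - 1 - i) (by omega)
    simp only [hwf]
    omega
  have hw : w.SortedGE := by
    rw [hwd, List.sortedGE_ofFn_iff]
    intro i j hij
    rcases eq_or_lt_of_le hij with hij | hij
    · rw [hij]
    have := hwdec (i : ℕ) (j : ℕ) hij j.2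
    show wf j ≤ wf i
    omega
  set Y := YoungDiagram.ofRowLens w hw with hY
  have hrow1 : ∀ i, i < k → Y.rowLen i = wf i := by
    intro i h
    have e1 : Y.rowLen i = w[(⟨i, by omega⟩ : Fin w.length)] :=
      YoungDiagram.rowLen_ofRowLens (w := w) (hw := hw) ⟨i, by omega⟩
    rw [e1]
    have := hwget i h
    rw [List.getD_eq_getElem w 0 (by omega)] at this
    exact this
  have hrow0 : ∀ i, k ≤ i → Y.rowLen i = 0 := by
    intro i h
    have hnm : (i, 0) ∉ Y := by
      rw [hY, YoungDiagram.mem_ofRowLens]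
      rintro ⟨hh, -⟩
      omega
    rw [YoungDiagram.mem_iff_lt_rowLen] at hnm
    omega
  have hk : nrows Y = k := by
    by_contra hne
    rcases Nat.lt_or_ge (nrows Y) k with hlt | hge
    · have h1 := hwpos (nrows Y) hlt
      have h2' := rowLen_eq_zero (Y := Y) (le_refl (nrows Y))
      rw [hrow1 _ hlt] at h2'
      omega
    · have h1 : k < nrows Y := by omega
      have h2' := lt_nrows_iff.mp h1
      rw [hrow0 k (le_refl k)] at h2'
      omega
  refine ⟨Y, ?_, ?_⟩
  · intro i hpos'
    by_cases hik : i + 1 < k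
    · rw [hrow1 _ hik, hrow1 _ (by omega)]
      have := hwdec i (i+1) (by omega) hik
      omega
    · rw [hrow0 _ (by omega)] at hpos'
      omega
  · ext x
    rw [mem_betaSet]
    constructor
    · rintro ⟨i, hi, rfl⟩
      rw [hk] at hi
      have e := bFun_def Y i
      rw [hrow1 _ hi, hk] at e
      rw [e, hwexact i hi]
      exact hmem _ (by omega)
    · intro hx
      have : x ∈ s := (hmemB x).mpr hx
      obtain ⟨p, hp, hpx⟩ := List.mem_iff_getElem.mp this
      have hpk : p < k := by omega
      refine ⟨k - 1 - p, by omega, ?_⟩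
      have e := bFun_def Y (k - 1 - p)
      rw [hrow1 _ (by omega), hk] at e
      rw [e]
      have e2 : k - 1 - (k - 1 - p) = p := by omega
      rw [e2]
      have e3 := hwexact (k - 1 - p) (by omega)
      rw [e2] at e3
      rw [e3, List.getD_eq_getElem s 0 (by omega)]
      exact hpx
def seqs (d : ℕ) : ℕ → Finset (List ℕ)
  | 0 => {([] : List ℕ)}
  | 1 => (Finset.range d).image fun c => [c]
  | (m+2) => ((seqs d (m+1)).image fun l => 0 :: l) ∪
      ((Finset.range d ×ˢ seqs d m).image fun p => (p.1 + 1) :: 0 :: p.2)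

lemma card_seqs_zero (d : ℕ) : (seqs d 0).card = 1 := rfl

lemma card_seqs_one (d : ℕ) : (seqs d 1).card = d := by
  rw [seqs, Finset.card_image_of_injective _ (fun a b h => by simpa using h),
    Finset.card_range]

lemma card_seqs_rec (d m : ℕ) :
    (seqs d (m+2)).card = (seqs d (m+1)).card + d * (seqs d m).card := by
  rw [seqs, Finset.card_union_of_disjoint]
  · congr 1
    · exact Finset.card_image_of_injective _ (fun a b h => by simpa using h)
    · rw [Finset.card_image_of_injective, Finset.card_product, Finset.card_range]
      rintro ⟨a1, a2⟩ ⟨b1, b2⟩ h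
      simp only [List.cons.injEq] at h
      simp only [Prod.mk.injEq]
      exact ⟨by omega, h.2.2⟩
  · rw [Finset.disjoint_left]
    rintro l hl1 hl2
    simp only [Finset.mem_image, Finset.mem_product] at hl1 hl2
    obtain ⟨l1, _, rfl⟩ := hl1
    obtain ⟨p, _, hp⟩ := hl2
    simp only [List.cons.injEq] at hp
    omega

def OkSeq (d : ℕ) (l : List ℕ) : Prop :=
  (∀ r, l.getD r 0 ≤ d) ∧ (∀ r, l.getD r 0 = 0 ∨ l.getD (r+1) 0 = 0) ∧
    l.getD (l.length - 1) 0 < d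

lemma mem_seqs {d : ℕ} (hd : 1 ≤ d) :
    ∀ (m : ℕ) (l : List ℕ), l ∈ seqs d m ↔ (l.length = m ∧ OkSeq d l) := by
  intro m
  induction m using Nat.strong_induction_on with
  | _ m ih =>
  match m with
  | 0 =>
    intro l
    rw [seqs, Finset.mem_singleton]
    constructor
    · rintro rfl
      exact ⟨rfl, fun r => by simp [List.getD], fun r => Or.inl (by simp [List.getD]),
        by simp [List.getD]; omega⟩
    · rintro ⟨hl, -⟩
      exact List.length_eq_zero_iff.mp hl
  | 1 =>
    intro l
    rw [seqs, Finset.mem_image]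
    constructor
    · rintro ⟨c, hc, rfl⟩
      rw [Finset.mem_range] at hc
      refine ⟨rfl, ?_, ?_, ?_⟩
      · intro r
        match r with
        | 0 => simpa using Nat.le_of_lt hc
        | (r+1) => simp [List.getD]
      · intro r
        right
        match r with
        | r => simp [List.getD]
      · simpa using hc
    · rintro ⟨hl, h1, h2, h3⟩
      match l with
      | [c] =>
        refine ⟨c, Finset.mem_range.mpr ?_, rfl⟩
        simpa using h3
  | (m+2) =>
    intro l
    rw [seqs, Finset.mem_union, Finset.mem_image, Finset.mem_image]
    constructor
    · rintro (⟨l', hl', rfl⟩ | ⟨⟨c, l'⟩, hp, rfl⟩)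
      · obtain ⟨hlen, h1, h2, h3⟩ := (ih (m+1) (by omega) l').mp hl'
        refine ⟨by simp [hlen], ?_, ?_, ?_⟩
        · intro r
          match r with
          | 0 => simp
          | (r+1) => simpa using h1 r
        · intro r
          match r with
          | 0 => exact Or.inl (by simp)
          | (r+1) => simpa using h2 r
        · have e : (0 :: l').length - 1 = (l'.length - 1) + 1 := by
            simp [hlen]
          rw [e, List.getD_cons_succ]
          exact h3
      · rw [Finset.mem_product, Finset.mem_range] at hp
        obtain ⟨hc, hl'⟩ := hp
        obtain ⟨hlen, h1, h2, h3⟩ := (ih m (by omega) l').mp hl'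
        refine ⟨by simp [hlen], ?_, ?_, ?_⟩
        · intro r
          match r with
          | 0 => simpa using hc
          | 1 => simp
          | (r+2) => simpa using h1 r
        · intro r
          match r with
          | 0 => exact Or.inr (by simp)
          | (r+1) =>
            match r with
            | 0 => exact Or.inl (by simp)
            | (r+1) => simpa using h2 r
        · rcases Nat.eq_zero_or_pos m with rfl | hm
          · have hl0 : l' = [] := List.length_eq_zero_iff.mp hlen
            subst hl0
            simpa using (show 0 < d by omega)
          · have e : ((c+1) :: 0 :: l').length - 1 = (l'.length - 1) + 2 := by
              simp [hlen]; omega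
            rw [e, List.getD_cons_succ, List.getD_cons_succ]
            exact h3
    · rintro ⟨hlen, h1, h2, h3⟩
      match l with
      | (x :: y :: t) =>
        have hlt : t.length = m := by simpa using hlen
        by_cases hx : x = 0
        · subst hx
          left
          refine ⟨y :: t, (ih (m+1) (by omega) (y :: t)).mpr ⟨by simp [hlt], ?_, ?_, ?_⟩, rfl⟩
          · intro r; simpa using h1 (r+1)
          · intro r; simpa using h2 (r+1)
          · have e : (0 :: y :: t).length - 1 = ((y :: t).length - 1) + 1 := by
              simp
            rw [e, List.getD_cons_succ] at h3
            exact h3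
        · right
          obtain ⟨c, rfl⟩ : ∃ c, x = c + 1 := ⟨x - 1, by omega⟩
          have hy : y = 0 := by
            rcases h2 0 with h | h
            · simp at h
            · simpa using h
          subst hy
          refine ⟨(c, t), Finset.mem_product.mpr ⟨Finset.mem_range.mpr ?_, ?_⟩, rfl⟩
          · have := h1 0; simp at this; omega
          · refine (ih m (by omega) t).mpr ⟨hlt, ?_, ?_, ?_⟩
            · intro r; simpa using h1 (r+2)
            · intro r; simpa using h2 (r+2)
            · rcases Nat.eq_zero_or_pos m with rfl | hm
              · have hl0 : t = [] := List.length_eq_zero_iff.mp hlt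
                subst hl0
                simpa using (show 0 < d by omega)
              · have e : ((c+1) :: 0 :: t).length - 1 = (t.length - 1) + 2 := by
                  simp [hlt]; omega
                rw [e, List.getD_cons_succ, List.getD_cons_succ] at h3
                exact h3
def toB (n : ℕ) (l : List ℕ) : Finset ℕ :=
  (Finset.range l.length).biUnion fun r =>
    (Finset.range (l.getD r 0)).image fun j => (r+1) + j*n

lemma mem_toB {n : ℕ} {l : List ℕ} {x : ℕ} :
    x ∈ toB n l ↔ ∃ r < l.length, ∃ j < l.getD r 0, (r+1) + j*n = x := by
  simp [toB]

lemma decomp_unique {n r r' j j' : ℕ} (hn : 0 < n) (hr : r < n) (hr' : r' < n)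
    (h : r + j * n = r' + j' * n) : r = r' ∧ j = j' := by
  have h1 : (r + j * n) % n = r := by
    rw [Nat.add_mul_mod_self_right, Nat.mod_eq_of_lt hr]
  have h2 : (r' + j' * n) % n = r' := by
    rw [Nat.add_mul_mod_self_right, Nat.mod_eq_of_lt hr']
  have hrr : r = r' := by rw [← h1, ← h2, h]
  subst hrr
  have hj : j * n = j' * n := by omega
  exact ⟨rfl, Nat.eq_of_mul_eq_mul_right hn hj⟩

lemma toB_spec {d n : ℕ} (hd : 1 ≤ d) (hn : 2 ≤ n) {l : List ℕ}
    (hlen : l.length = n - 1) (hOk : OkSeq d l) :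
    0 ∉ toB n l ∧ (∀ x ∈ toB n l, x + 1 ∉ toB n l) ∧
      Closed n (toB n l) ∧ Closed (d*n - 1) (toB n l) := by
  obtain ⟨e, rfl⟩ : ∃ e, d = e + 1 := ⟨d - 1, by omega⟩
  obtain ⟨h1, h2, h3⟩ := hOk
  have hen : (e+1) * n = e * n + n := by ring
  have hbound : ∀ x ∈ toB n l, x < (e+1) * n - 1 := by
    intro x hx
    obtain ⟨r, hr, j, hj, rfl⟩ := mem_toB.mp hx
    have hjd : j < e + 1 := lt_of_lt_of_le hj (h1 r)
    rcases Nat.lt_or_ge j e with hj1 | hj1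
    · have hmul : (j+1) * n ≤ e * n := Nat.mul_le_mul_right n (by omega)
      have hj2 : (j+1) * n = j*n + n := by ring
      omega
    · have hje : j = e := by omega
      subst hje
      rcases Nat.lt_or_ge r (n-2) with hr1 | hr1
      · omega
      · exfalso
        have hrr : r = n - 2 := by omega
        have hlast := h3
        rw [hlen] at hlast
        have : n - 1 - 1 = r := by omega
        rw [this] at hlast
        omega
  refine ⟨?_, ?_, ?_, ?_⟩
  · intro hx
    obtain ⟨r, hr, j, hj, he⟩ := mem_toB.mp hx
    omega
  · intro x hx hx1
    obtain ⟨r, hr, j, hj, rfl⟩ := mem_toB.mp hx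
    obtain ⟨r', hr', j', hj', he⟩ := mem_toB.mp hx1
    rcases Nat.lt_or_ge (r+2) n with hc | hc
    · obtain ⟨e1, e2⟩ := decomp_unique (show 0 < n by omega) (show r'+1 < n by omega)
        hc (show (r'+1) + j'*n = (r+2) + j*n by omega)
      have hra : r' = r + 1 := by omega
      subst hra e2
      rcases h2 r with hz | hz
      · omega
      · omega
    · have hee : (j+1) * n = j*n + n := by ring
      obtain ⟨e1, e2⟩ := decomp_unique (show 0 < n by omega) (show r'+1 < n by omega)
        (show 0 < n by omega) (show (r'+1) + j'*n = 0 + (j+1)*n by omega)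
      omega
  · intro x hx hle
    obtain ⟨r, hr, j, hj, rfl⟩ := mem_toB.mp hx
    have hj1 : 1 ≤ j := by
      by_contra hz
      have : j = 0 := by omega
      subst this
      simp at hle
      omega
    obtain ⟨j', rfl⟩ : ∃ j', j = j' + 1 := ⟨j - 1, by omega⟩
    have he : (j'+1) * n = j'*n + n := by ring
    have hmem : (r+1) + j'*n ∈ toB n l := mem_toB.mpr ⟨r, hr, j', by omega, rfl⟩
    have : (r+1) + (j'+1)*n - n = (r+1) + j'*n := by omega
    rw [this]
    exact hmem
  · intro x hx hle
    exact absurd hle (by have := hbound x hx; omega)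

lemma exists_seq_of_BSet {d n : ℕ} (hd : 1 ≤ d) (hn : 2 ≤ n) {B : Finset ℕ}
    (h0 : 0 ∉ B) (h2 : ∀ x ∈ B, x + 1 ∉ B) (hc1 : Closed n B) (hc2 : Closed (d*n-1) B) :
    ∃ l, l.length = n - 1 ∧ OkSeq d l ∧ toB n l = B := by
  classical
  obtain ⟨e, rfl⟩ : ∃ e, d = e + 1 := ⟨d - 1, by omega⟩
  have hn0 : 0 < n := by omega
  have hen : (e+1) * n = e * n + n := by ring
  have hbound : ∀ x ∈ B, x < (e+1) * n - 1 := by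
    intro x hx
    by_contra hge
    push_neg at hge
    have hy : x - ((e+1)*n-1) ∈ B := hc2 x hx (by omega)
    have hy0 : x - ((e+1)*n-1) ≠ 0 := fun hz => h0 (hz ▸ hy)
    have hw : x - (e+1) * n ∈ B := closed_chain hc1 (e+1) x hx (by omega)
    have heq : (x - (e+1)*n) + 1 = x - ((e+1)*n - 1) := by omega
    exact h2 _ hw (heq ▸ hy)
  have hdecomp : ∀ x ∈ B, ∃ r j, r < n - 1 ∧ j < e + 1 ∧ x = (r+1) + j*n := by
    intro x hx
    have e1 : x % n + x / n * n = x := Nat.mod_add_div' x n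
    have hmlt : x % n < n := Nat.mod_lt x hn0
    have hm1 : 1 ≤ x % n := by
      rcases Nat.eq_zero_or_pos (x % n) with hz | hp
      · exfalso
        have hle : x / n * n ≤ x := by omega
        have hch := closed_chain hc1 (x / n) x hx hle
        have hxq : x - x / n * n = 0 := by omega
        rw [hxq] at hch
        exact h0 hch
      · exact hp
    have hqd : x / n < e + 1 := by
      by_contra hge'
      push_neg at hge'
      have hm : (e+1) * n ≤ x / n * n := Nat.mul_le_mul_right n hge'
      have hb := hbound x hx
      omega
    exact ⟨x % n - 1, x / n, by omega, hqd, by omega⟩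
  have hdown : ∀ (m r j : ℕ), (r+1) + (j+m)*n ∈ B → (r+1) + j*n ∈ B := by
    intro m
    induction m with
    | zero => intro r j h; simpa using h
    | succ m ih =>
      intro r j h
      apply ih
      have he : (j + (m+1)) * n = (j + m) * n + n := by ring
      have hcl := hc1 _ h (by omega)
      have e2 : (r+1) + (j+(m+1))*n - n = (r+1) + (j+m)*n := by omega
      rw [e2] at hcl
      exact hcl
  have hex : ∀ r : ℕ, ∃ j, (r+1) + j*n ∉ B := by
    intro r
    refine ⟨e+1, fun hmem => ?_⟩
    have hb := hbound _ hmem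
    omega
  set a : ℕ → ℕ := fun r => Nat.find (hex r) with ha
  have hain : ∀ r j, j < a r → (r+1) + j*n ∈ B := by
    intro r j hj
    have hh := Nat.find_min (hex r) hj
    simpa using hh
  have haout : ∀ r j, a r ≤ j → (r+1) + j*n ∉ B := by
    intro r j hj hmem
    have hspec := Nat.find_spec (hex r)
    have hh := hdown (j - a r) r (a r) (by rw [show a r + (j - a r) = j by omega]; exact hmem)
    exact hspec hh
  have had : ∀ r, a r ≤ e + 1 := by
    intro r
    refine Nat.find_le fun hmem => ?_
    have hb := hbound _ hmem
    omega
  have hgetD : ∀ r : ℕ, (List.ofFn (fun r : Fin (n-1) => a (r : ℕ))).getD r 0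
      = if r < n - 1 then a r else 0 := by
    intro r
    by_cases h : r < n - 1
    · rw [List.getD_eq_getElem _ 0 (by simpa using h), List.getElem_ofFn]
      simp [h]
    · rw [List.getD_eq_default _ 0 (by simpa using Nat.le_of_not_lt h)]
      simp [h]
  refine ⟨List.ofFn (fun r : Fin (n-1) => a (r : ℕ)), by simp, ⟨?_, ?_, ?_⟩, ?_⟩
  · intro r
    rw [hgetD]
    split
    · exact had r
    · omega
  · intro r
    rw [hgetD, hgetD]
    by_contra hboth
    push_neg at hboth
    obtain ⟨hz1, hz2⟩ := hboth
    have hr1 : r < n - 1 := by by_contra hh; simp [hh] at hz1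
    have hr2 : r + 1 < n - 1 := by by_contra hh; simp [hh] at hz2
    rw [if_pos hr1] at hz1
    rw [if_pos hr2] at hz2
    have hm1 : (r+1) + 0*n ∈ B := hain r 0 (by omega)
    have hm2 : (r+1+1) + 0*n ∈ B := hain (r+1) 0 (by omega)
    simp only [Nat.zero_mul, Nat.add_zero] at hm1 hm2
    exact h2 _ hm1 hm2
  · rw [List.length_ofFn, hgetD]
    rw [if_pos (show n-1-1 < n-1 by omega)]
    have h1 := had (n-1-1)
    rcases Nat.lt_or_ge (a (n-1-1)) (e+1) with hlt | hge
    · exact hlt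
    · exfalso
      have hmem : ((n-1-1)+1) + e*n ∈ B := hain _ e (by omega)
      have hb := hbound _ hmem
      omega
  · ext x
    rw [mem_toB]
    simp only [List.length_ofFn]
    constructor
    · rintro ⟨r, hr, j, hj, rfl⟩
      rw [hgetD, if_pos hr] at hj
      exact hain r j hj
    · intro hx
      obtain ⟨r, j, hr, hj, heq⟩ := hdecomp x hx
      subst heq
      refine ⟨r, hr, j, ?_, rfl⟩
      rw [hgetD, if_pos hr]
      by_contra hh
      exact haout r j (by omega) hx

lemma toB_inj {n : ℕ} (hn : 2 ≤ n) {l1 l2 : List ℕ}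
    (h1 : l1.length = n-1) (h2 : l2.length = n-1) (h : toB n l1 = toB n l2) :
    l1 = l2 := by
  apply List.ext_getElem (by omega)
  intro r hr1 hr2
  have key : ∀ (l : List ℕ), l.length = n - 1 →
      ∀ j, ((r+1) + j*n ∈ toB n l ↔ j < l.getD r 0) := by
    intro l hl j
    constructor
    · intro hm
      obtain ⟨r', hr', j', hj', he⟩ := mem_toB.mp hm
      obtain ⟨e1, e2⟩ := decomp_unique (show 0 < n by omega)
        (show r'+1 < n by omega) (show r+1 < n by omega) he
      have : r' = r := by omega
      subst this e2
      exact hj'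
    · intro hj
      exact mem_toB.mpr ⟨r, by omega, j, hj, rfl⟩
  have k1 := key l1 h1
  have k2 := key l2 h2
  rw [h] at k1
  have hiff : ∀ j, j < l1.getD r 0 ↔ j < l2.getD r 0 :=
    fun j => (k1 j).symm.trans (k2 j)
  have e1 := hiff (l1.getD r 0)
  have e2 := hiff (l2.getD r 0)
  rw [List.getD_eq_getElem l1 0 hr1, List.getD_eq_getElem l2 0 hr2] at e1 e2
  omega
def YSet (d n : ℕ) : Set YoungDiagram :=
  {Y | DistinctParts Y ∧ IsCore Y n ∧ IsCore Y (d * n - 1)}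

lemma ncount_def (d n : ℕ) : Ncount d n = (YSet d n).ncard := rfl

lemma ncount_eq {d : ℕ} (hd : 1 ≤ d) (n : ℕ) (hn : 1 ≤ n) :
    Ncount d n = (seqs d (n-1)).card := by
  rcases eq_or_lt_of_le hn with h1 | h1
  · -- n = 1
    subst h1
    have hset : YSet d 1 = {⊥} := by
      ext Y
      simp only [YSet, Set.mem_setOf_eq, Set.mem_singleton_iff]
      constructor
      · rintro ⟨-, hc, -⟩
        have hcells : Y.cells = ∅ := by
          by_contra hne
          obtain ⟨c, hc'⟩ := Finset.nonempty_of_ne_empty hne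
          exact hc c hc' (one_dvd _)
        apply le_antisymm _ bot_le
        exact YoungDiagram.cells_subset_iff.mp (by rw [hcells]; exact Finset.empty_subset _)
      · rintro rfl
        refine ⟨?_, ?_, ?_⟩
        · intro i hp
          exfalso
          have hmm : ((i+1 : ℕ), (0:ℕ)) ∈ (⊥ : YoungDiagram) :=
            YoungDiagram.mem_iff_lt_rowLen.mpr hp
          exact YoungDiagram.notMem_bot _ hmm
        · intro c hc
          rw [YoungDiagram.cells_bot] at hc
          exact absurd hc (Finset.notMem_empty c)
        · intro c hc
          rw [YoungDiagram.cells_bot] at hc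
          exact absurd hc (Finset.notMem_empty c)
    rw [ncount_def, hset, Set.ncard_singleton]
    rfl
  · have hn2 : 2 ≤ n := h1
    have ht2 : 1 ≤ d * n - 1 := by
      have h22 : 1 * 2 ≤ d * n := Nat.mul_le_mul hd hn2
      omega
    have himg : betaSet '' (YSet d n)
        = (fun l => toB n l) '' ((seqs d (n-1) : Finset (List ℕ)) : Set (List ℕ)) := by
      ext B
      simp only [Set.mem_image, YSet, Set.mem_setOf_eq, Finset.mem_coe]
      constructor
      · rintro ⟨Y, ⟨hD, hc1, hc2⟩, rfl⟩
        have hcl1 : Closed n (betaSet Y) := (isCore_iff (by omega)).mp hc1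
        have hcl2 : Closed (d*n-1) (betaSet Y) := (isCore_iff ht2).mp hc2
        have h0 : 0 ∉ betaSet Y := by
          intro h00
          obtain ⟨i, hi, hb⟩ := mem_betaSet.mp h00
          have := one_le_bFun hi
          omega
        obtain ⟨l, hlen, hOk, hBeq⟩ :=
          exists_seq_of_BSet hd hn2 h0 (gaps2_betaSet hD) hcl1 hcl2
        exact ⟨l, (mem_seqs hd (n-1) l).mpr ⟨hlen, hOk⟩, hBeq⟩
      · rintro ⟨l, hl, rfl⟩
        obtain ⟨hlen, hOk⟩ := (mem_seqs hd (n-1) l).mp hl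
        obtain ⟨h0, hg, hcl1, hcl2⟩ := toB_spec hd hn2 hlen hOk
        obtain ⟨Y, hD, hBY⟩ := exists_diagram h0 hg
        refine ⟨Y, ⟨hD, ?_, ?_⟩, hBY⟩
        · exact (isCore_iff (by omega)).mpr (hBY ▸ hcl1)
        · exact (isCore_iff ht2).mpr (hBY ▸ hcl2)
    have hinj : Set.InjOn betaSet (YSet d n) := fun Y1 _ Y2 _ h => betaSet_injective h
    rw [ncount_def, ← Set.ncard_image_of_injOn hinj, himg,
      Set.ncard_image_of_injOn, Set.ncard_coe_finset]
    intro l1 hl1 l2 hl2 heq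
    exact toB_inj hn2 ((mem_seqs hd _ _).mp (Finset.mem_coe.mp hl1)).1
      ((mem_seqs hd _ _).mp (Finset.mem_coe.mp hl2)).1 heq

end Straub

theorem straub (d : ℕ) (hd : 1 ≤ d) :
    Ncount d 1 = 1 ∧ Ncount d 2 = d ∧
      ∀ n : ℕ, 3 ≤ n → Ncount d n = Ncount d (n - 1) + d * Ncount d (n - 2) := by
  refine ⟨?_, ?_, ?_⟩
  · rw [Straub.ncount_eq hd 1 le_rfl]
    exact Straub.card_seqs_zero d
  · rw [Straub.ncount_eq hd 2 (by omega)]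
    exact Straub.card_seqs_one d
  · intro n hn
    rw [Straub.ncount_eq hd n (by omega), Straub.ncount_eq hd (n-1) (by omega),
      Straub.ncount_eq hd (n-2) (by omega)]
    rw [show n - 1 - 1 = n - 3 + 1 from by omega, show n - 2 - 1 = n - 3 from by omega,
      show n - 1 = n - 3 + 2 from by omega]
    exact Straub.card_seqs_rec d (n-3)
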